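/- In the linear Anderson mixing setup, let k ≥ 1 and suppose rank(R_k) = k. Then the span of the columns of X_k equals the k-th Krylov subspace generated by A and the initial residual: span{Δx_0, …, Δx_{k−1}} = 𝒦_k(A, r(x₀)). -/

import Mathlib

open Matrix

/-- The Euclidean (ℓ₂) norm of a vector in `ℝ^n`. -/
noncomputable def norm2 {n : ℕ} (v : Fin n → ℝ) : ℝ := Real.sqrt (∑ i, v i ^ 2)

/-- The residual `r(x) = b − Ax`. -/
def resid {d : ℕ} (A : Matrix (Fin d) (Fin d) ℝ) (b : Fin d → ℝ) (x : Fin d → ℝ) :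
    Fin d → ℝ := b - A.mulVec x

/-- The matrix whose columns are the first `j` forward differences of the sequence `v`. -/
def diffMat {d : ℕ} (v : ℕ → Fin d → ℝ) (j : ℕ) : Matrix (Fin d) (Fin j) ℝ :=
  Matrix.of fun i (l : Fin j) => v ((l : ℕ) + 1) i - v (l : ℕ) i

/-- The `k`-th Krylov subspace `𝒦_k(A, v) = span{v, Av, …, A^{k−1}v}`. -/
def krylov {d : ℕ} (A : Matrix (Fin d) (Fin d) ℝ) (v : Fin d → ℝ) (k : ℕ) :
    Submodule ℝ (Fin d → ℝ) :=
  Submodule.span ℝ {w | ∃ i < k, w = (A ^ i).mulVec v}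

lemma krylov_mono {d : ℕ} (A : Matrix (Fin d) (Fin d) ℝ) (v : Fin d → ℝ) {k m : ℕ}
    (h : k ≤ m) : krylov A v k ≤ krylov A v m :=
  Submodule.span_mono (fun w ⟨i, hi, hw⟩ => ⟨i, lt_of_lt_of_le hi h, hw⟩)

lemma pow_mem_krylov {d : ℕ} (A : Matrix (Fin d) (Fin d) ℝ) (v : Fin d → ℝ) {i k : ℕ}
    (h : i < k) : (A ^ i).mulVec v ∈ krylov A v k :=
  Submodule.subset_span ⟨i, h, rfl⟩

lemma self_mem_krylov {d : ℕ} (A : Matrix (Fin d) (Fin d) ℝ) (v : Fin d → ℝ) {k : ℕ}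
    (h : 0 < k) : v ∈ krylov A v k := by
  have := pow_mem_krylov A v h
  simpa using this

lemma mulVec_mem_krylov {d : ℕ} {A : Matrix (Fin d) (Fin d) ℝ} {v w : Fin d → ℝ} {k : ℕ}
    (h : w ∈ krylov A v k) : A.mulVec w ∈ krylov A v (k + 1) := by
  induction h using Submodule.span_induction with
  | mem w hw =>
    obtain ⟨i, hi, rfl⟩ := hw
    rw [Matrix.mulVec_mulVec, ← pow_succ']
    exact pow_mem_krylov A v (Nat.succ_lt_succ hi)
  | zero => simp [Matrix.mulVec_zero]
  | add a b _ _ ha hb => rw [Matrix.mulVec_add]; exact Submodule.add_mem _ ha hb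
  | smul c a _ ha => rw [Matrix.mulVec_smul]; exact Submodule.smul_mem _ _ ha

lemma diffMat_mulVec_eq_sum {d j : ℕ} (x : ℕ → Fin d → ℝ) (G : Fin j → ℝ) :
    (diffMat x j).mulVec G
      = ∑ l : Fin j, G l • (x ((l : ℕ) + 1) - x (l : ℕ)) := by
  funext i
  simp only [Matrix.mulVec, dotProduct, diffMat, Matrix.of_apply, Finset.sum_apply,
    Pi.smul_apply, Pi.sub_apply, smul_eq_mul]
  exact Finset.sum_congr rfl fun l _ => mul_comm _ _

lemma diffMat_resid_eq {d : ℕ} (A : Matrix (Fin d) (Fin d) ℝ) (b : Fin d → ℝ)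
    (x : ℕ → Fin d → ℝ) (j : ℕ) :
    diffMat (fun i => resid A b (x i)) j = -(A * diffMat x j) := by
  ext i m
  simp only [diffMat, resid, Matrix.of_apply, Pi.sub_apply, Matrix.neg_apply,
    Matrix.mul_apply, Matrix.mulVec, dotProduct, mul_sub, Finset.sum_sub_distrib]
  ring

lemma resid_eq {d : ℕ} (A : Matrix (Fin d) (Fin d) ℝ) (b : Fin d → ℝ) (y z : Fin d → ℝ) :
    resid A b y = resid A b z - A.mulVec (y - z) := by
  simp only [resid, Matrix.mulVec_sub]
  abel

/-- Key inductive claim in the proof of Proposition 1: if `rank R_k = k`, the span of the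
columns of `X_k` equals the `k`-th Krylov subspace `𝒦_k(A, r(x₀))`. -/
theorem anderson_mixing_span_eq_krylov (d : ℕ) (hd : 1 ≤ d)
    (A : Matrix (Fin d) (Fin d) ℝ) (hA : A.PosDef)
    (b x0 : Fin d → ℝ)
    (x : ℕ → Fin d → ℝ) (Γ : (j : ℕ) → Fin j → ℝ)
    (hx0 : x 0 = x0)
    (hx1 : x 1 = x 0 + resid A b (x 0))
    (hΓ : ∀ j : ℕ, ∀ G : Fin j → ℝ,
      norm2 (resid A b (x j) - (diffMat (fun i => resid A b (x i)) j).mulVec (Γ j)) ≤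
        norm2 (resid A b (x j) - (diffMat (fun i => resid A b (x i)) j).mulVec G))
    (hrec : ∀ j : ℕ, 1 ≤ j →
      x (j + 1) = x j + resid A b (x j)
        - (diffMat x j + diffMat (fun i => resid A b (x i)) j).mulVec (Γ j))
    (k : ℕ) (hk : 1 ≤ k)
    (hrank : (diffMat (fun i => resid A b (x i)) k).rank = k) :
    Submodule.span ℝ (Set.range fun l : Fin k => fun i => x ((l : ℕ) + 1) i - x (l : ℕ) i)
      = krylov A (resid A b x0) k := by
  set r0 := resid A b x0 with hr0
  -- residual at step l in terms of r0 and a telescoping sum of the Δx's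
  have hresid : ∀ l : ℕ,
      resid A b (x l) = r0 - A.mulVec (∑ m ∈ Finset.range l, (x (m + 1) - x m)) := by
    intro l
    rw [Finset.sum_range_sub (f := x), hr0, ← hx0]
    exact resid_eq A b (x l) (x 0)
  -- every Δx_l lies in 𝒦_{l+1}(A, r0)
  have key : ∀ l : ℕ, x (l + 1) - x l ∈ krylov A r0 (l + 1) := by
    intro l
    induction l using Nat.strong_induction_on with
    | _ l IH =>
      rcases Nat.eq_zero_or_pos l with h0 | hl
      · subst h0
        have : x 1 - x 0 = r0 := by rw [hx1, hr0, ← hx0]; abel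
        rw [this]
        exact self_mem_krylov A r0 Nat.one_pos
      · have hstep := hrec l hl
        have hX : (diffMat x l).mulVec (Γ l) ∈ krylov A r0 l := by
          rw [diffMat_mulVec_eq_sum]
          refine Submodule.sum_mem _ fun m _ => Submodule.smul_mem _ _ ?_
          exact krylov_mono A r0 (Nat.succ_le_of_lt m.isLt) (IH m m.isLt)
        have hsum : (∑ m ∈ Finset.range l, (x (m + 1) - x m)) ∈ krylov A r0 l := by
          refine Submodule.sum_mem _ fun m hm => ?_
          exact krylov_mono A r0 (Nat.succ_le_of_lt (Finset.mem_range.mp hm))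
            (IH m (Finset.mem_range.mp hm))
        have hr : resid A b (x l) ∈ krylov A r0 (l + 1) := by
          rw [hresid l]
          exact Submodule.sub_mem _ (self_mem_krylov A r0 (Nat.succ_pos l))
            (mulVec_mem_krylov hsum)
        have hΔ : x (l + 1) - x l
            = resid A b (x l) - (diffMat x l).mulVec (Γ l)
              + A.mulVec ((diffMat x l).mulVec (Γ l)) := by
          rw [hstep, Matrix.add_mulVec, diffMat_resid_eq, Matrix.neg_mulVec,
            Matrix.mulVec_mulVec]
          abel
        rw [hΔ]
        exact Submodule.add_mem _
          (Submodule.sub_mem _ hr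
            (krylov_mono A r0 (Nat.le_succ l) hX))
          (mulVec_mem_krylov hX)
  -- the span of the columns of `X_k` is contained in the Krylov space
  have hle : Submodule.span ℝ
        (Set.range fun l : Fin k => fun i => x ((l : ℕ) + 1) i - x (l : ℕ) i)
      ≤ krylov A r0 k := by
    rw [Submodule.span_le]
    rintro w ⟨l, rfl⟩
    show (fun i => x ((l : ℕ) + 1) i - x (l : ℕ) i) ∈ krylov A r0 k
    exact krylov_mono A r0 (Nat.succ_le_of_lt l.isLt) (key l)
  -- identify the columns of `X_k` with the given family
  have hcols : (diffMat x k)ᵀ = fun l : Fin k => fun i => x ((l : ℕ) + 1) i - x (l : ℕ) i := by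
    funext l i; rfl
  -- the columns of `X_k` span a `k`-dimensional space
  have hrankX : (diffMat x k).rank = k := by
    have h1 : (diffMat x k).rank ≤ k := by
      simpa using (diffMat x k).rank_le_card_width
    have h2 : k ≤ (diffMat x k).rank := by
      have := Matrix.rank_mul_le_right (-A) (diffMat x k)
      rw [Matrix.neg_mul, ← diffMat_resid_eq A b x k, hrank] at this
      simpa using this
    omega
  have hfinS : Module.finrank ℝ
      (Submodule.span ℝ
        (Set.range fun l : Fin k => fun i => x ((l : ℕ) + 1) i - x (l : ℕ) i)) = k := by
    have hcols' : (diffMat x k).col = _ := hcols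
    rw [← hcols', ← Matrix.rank_eq_finrank_span_cols, hrankX]
  -- the Krylov space has dimension at most `k`
  have hfinT : Module.finrank ℝ (krylov A r0 k) ≤ k := by
    have hset : {w | ∃ i < k, w = (A ^ i).mulVec r0}
        = Set.range (fun i : Fin k => (A ^ (i : ℕ)).mulVec r0) := by
      ext w
      constructor
      · rintro ⟨i, hi, rfl⟩; exact ⟨⟨i, hi⟩, rfl⟩
      · rintro ⟨i, rfl⟩; exact ⟨i, i.isLt, rfl⟩
    rw [krylov, hset]
    simpa [Set.finrank] using finrank_range_le_card (R := ℝ) (fun i : Fin k => (A ^ (i : ℕ)).mulVec r0)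
  exact Submodule.eq_of_le_of_finrank_le hle (by rw [hfinS]; exact hfinT)
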